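/- arXiv:2311.04604 — 2 statements merged into one kernel-verified Lean document; each statement's English description precedes it below -/
import Mathlib

section
/- If f : ℝⁿ → ℝ is differentiable with L-Lipschitz gradient, then its Gaussian smoothing fᵘ(x) = E_{u ~ N(0,I)}[f(x + μu)] is differentiable with L-Lipschitz gradient. -/
open MeasureTheory ProbabilityTheory

/-- The standard Gaussian measure `N(0, I)` on `ℝⁿ`. -/
noncomputable def stdGaussian (n : ℕ) : Measure (EuclideanSpace ℝ (Fin n)) :=
  (Measure.pi fun _ : Fin n => ProbabilityTheory.gaussianReal 0 1).map
    (EuclideanSpace.equiv (Fin n) ℝ).symm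

/-- Gaussian smoothing `fᵘ(x) = E_{u ~ N(0,I)}[f(x + μ u)]`. -/
noncomputable def gaussianSmoothing {n : ℕ} (f : EuclideanSpace ℝ (Fin n) → ℝ) (μ : ℝ) :
    EuclideanSpace ℝ (Fin n) → ℝ :=
  fun x => ∫ u, f (x + μ • u) ∂(stdGaussian n)

namespace GaussianSmoothingAux

instance (n : ℕ) : IsProbabilityMeasure (stdGaussian n) :=
  Measure.isProbabilityMeasure_map
    ((MeasurableEquiv.toLp 2 (Fin n → ℝ)).measurable.aemeasurable)

lemma integrable_abs_pow_gaussian (k : ℕ) :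
    Integrable (fun x : ℝ => |x| ^ k) (gaussianReal 0 1) := by
  rw [gaussianReal_of_var_ne_zero _ one_ne_zero]
  rw [integrable_withDensity_iff (measurable_gaussianPDF _ _)
    (ae_of_all _ fun x => ENNReal.ofReal_lt_top)]
  simp only [gaussianPDF, ENNReal.toReal_ofReal (gaussianPDFReal_nonneg 0 1 _)]
  unfold gaussianPDFReal
  have h : Integrable (fun x : ℝ => |x| ^ k * Real.exp (-(1/2) * x ^ 2)) := by
    have h0 := (integrable_rpow_mul_exp_neg_mul_sq (by norm_num : (0:ℝ) < 1/2)
      (s := k) (neg_one_lt_zero.trans_le (Nat.cast_nonneg k))).abs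
    refine h0.congr (Filter.Eventually.of_forall fun x => ?_)
    simp only [Real.rpow_natCast, abs_mul, abs_pow, abs_of_nonneg (Real.exp_nonneg _)]
  refine (h.const_mul ((Real.sqrt (2 * Real.pi * 1))⁻¹)).congr
    (Filter.Eventually.of_forall fun x => ?_)
  push_cast
  ring_nf

lemma map_eval_pi (n : ℕ) (i : Fin n) :
    (Measure.pi fun _ : Fin n => gaussianReal 0 1).map (Function.eval i)
      = gaussianReal 0 1 := by
  ext s hs
  rw [Measure.map_apply (measurable_pi_apply i) hs]
  have : (Function.eval i ⁻¹' s : Set (Fin n → ℝ))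
      = Set.pi Set.univ (Function.update (fun _ : Fin n => (Set.univ : Set ℝ)) i s) := by
    ext y
    simp only [Set.mem_preimage, Function.eval, Set.mem_pi, Set.mem_univ, true_implies]
    constructor
    · intro h j
      rcases eq_or_ne j i with rfl | hj
      · simpa using h
      · simp [Function.update_of_ne hj]
    · intro h; simpa using h i
  rw [this, Measure.pi_pi]
  rw [Finset.prod_eq_single i]
  · simp
  · intro j _ hj; simp [Function.update_of_ne hj]
  · simp

lemma integrable_coord_pow (n k : ℕ) (i : Fin n) :
    Integrable (fun u : EuclideanSpace ℝ (Fin n) => |u i| ^ k) (stdGaussian n) := by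
  have h : stdGaussian n = (Measure.pi fun _ : Fin n => gaussianReal 0 1).map
      (MeasurableEquiv.toLp 2 (Fin n → ℝ)) := rfl
  rw [h, MeasureTheory.integrable_map_equiv _]
  have h2 : Integrable (fun y : Fin n → ℝ => |y i| ^ k)
      (Measure.pi fun _ : Fin n => gaussianReal 0 1) := by
    have := (integrable_map_measure
      (((measurable_abs.pow_const k)).aestronglyMeasurable)
      (measurable_pi_apply i).aemeasurable (f := Function.eval i)
      (μ := Measure.pi fun _ : Fin n => gaussianReal 0 1)).mp
    rw [map_eval_pi] at this
    exact this (integrable_abs_pow_gaussian k)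
  exact h2

lemma integrable_norm_pow (n : ℕ) :
    Integrable (fun u : EuclideanSpace ℝ (Fin n) => ‖u‖) (stdGaussian n) := by
  have hb : Integrable (fun u : EuclideanSpace ℝ (Fin n) => ∑ i, |u i| ^ 1)
      (stdGaussian n) := integrable_finset_sum _ fun i _ => integrable_coord_pow n 1 i
  refine hb.mono' continuous_norm.aestronglyMeasurable
    (Filter.Eventually.of_forall fun u => ?_)
  rw [Real.norm_eq_abs, abs_of_nonneg (norm_nonneg u)]
  simp only [pow_one]
  rw [EuclideanSpace.norm_eq]
  have h1 : ∑ i, ‖u i‖ ^ 2 ≤ (∑ i, |u i|) ^ 2 := by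
    simpa [Real.norm_eq_abs] using
      Finset.sum_sq_le_sq_sum_of_nonneg (s := Finset.univ)
        (f := fun i => |u i|) (fun i _ => abs_nonneg (u i))
  calc Real.sqrt (∑ i, ‖u i‖ ^ 2) ≤ Real.sqrt ((∑ i, |u i|) ^ 2) := Real.sqrt_le_sqrt h1
    _ = ∑ i, |u i| := Real.sqrt_sq (Finset.sum_nonneg fun i _ => abs_nonneg _)

lemma integrable_norm_sq (n : ℕ) :
    Integrable (fun u : EuclideanSpace ℝ (Fin n) => ‖u‖ ^ 2) (stdGaussian n) := by
  have hb : Integrable (fun u : EuclideanSpace ℝ (Fin n) => ∑ i, |u i| ^ 2)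
      (stdGaussian n) := integrable_finset_sum _ fun i _ => integrable_coord_pow n 2 i
  refine hb.congr (Filter.Eventually.of_forall fun u => ?_)
  simp only [EuclideanSpace.norm_eq]
  rw [Real.sq_sqrt (by positivity)]
  simp [sq_abs, Real.norm_eq_abs]

variable {n : ℕ}

lemma grad_cont (f : EuclideanSpace ℝ (Fin n) → ℝ) (L : ℝ)
    (hf : ∀ x y, ‖gradient f x - gradient f y‖ ≤ L * ‖x - y‖) :
    Continuous (gradient f) := by
  refine (LipschitzWith.of_dist_le_mul (K := L.toNNReal) fun x y => ?_).continuous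
  rw [dist_eq_norm, dist_eq_norm]
  exact (hf x y).trans (mul_le_mul_of_nonneg_right (Real.le_coe_toNNReal L) (norm_nonneg _))

lemma descent (f : EuclideanSpace ℝ (Fin n) → ℝ) (L : ℝ) (hL : 0 ≤ L)
    (hdiff : ∀ x, DifferentiableAt ℝ f x)
    (hf : ∀ x y, ‖gradient f x - gradient f y‖ ≤ L * ‖x - y‖)
    (x y : EuclideanSpace ℝ (Fin n)) :
    ‖f y - f x - inner ℝ (gradient f x) (y - x)‖ ≤ L * ‖y - x‖ * ‖y - x‖ := by
  have hgrad : ∀ z : EuclideanSpace ℝ (Fin n), fderiv ℝ f z = InnerProductSpace.toDual ℝ _ (gradient f z) := fun z =>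
    ((hdiff z).hasGradientAt.hasFDerivAt).fderiv
  have h := Convex.norm_image_sub_le_of_norm_fderiv_le'
    (f := f) (φ := InnerProductSpace.toDual ℝ _ (gradient f x)) (C := L * ‖y - x‖)
    (s := Metric.closedBall x ‖y - x‖)
    (fun z _ => hdiff z)
    (fun z hz => by
      rw [hgrad, ← map_sub, (InnerProductSpace.toDual ℝ _).norm_map]
      refine (hf z x).trans ?_
      have hzx : ‖z - x‖ ≤ ‖y - x‖ := by
        rw [← dist_eq_norm]; exact Metric.mem_closedBall.mp hz
      exact mul_le_mul_of_nonneg_left hzx hL)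
    (convex_closedBall _ _) (Metric.mem_closedBall_self (norm_nonneg _))
    (Metric.mem_closedBall.mpr (le_of_eq (dist_eq_norm y x)))
  rw [InnerProductSpace.toDual_apply_apply] at h
  linarith [h]

section core

variable (f : EuclideanSpace ℝ (Fin n) → ℝ) (L : ℝ) (hL : 0 ≤ L)
  (hdiff : ∀ x, DifferentiableAt ℝ f x)
  (hf : ∀ x y, ‖gradient f x - gradient f y‖ ≤ L * ‖x - y‖)
  (μ : ℝ) (hμ : 0 < μ)

include hL hdiff hf hμ

lemma int_grad (x : EuclideanSpace ℝ (Fin n)) :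
    Integrable (fun u : EuclideanSpace ℝ (Fin n) => gradient f (x + μ • u)) (stdGaussian n) := by
  have hcont : Continuous fun u : EuclideanSpace ℝ (Fin n) => x + μ • u :=
    continuous_const.add (continuous_id.const_smul μ)
  refine Integrable.mono'
    ((integrable_const (‖gradient f x‖)).add ((integrable_norm_pow n).const_mul (L * μ)))
    (((grad_cont f L hf).comp hcont).aestronglyMeasurable)
    (Filter.Eventually.of_forall fun u => ?_)
  have h1 : ‖gradient f (x + μ • u)‖ ≤ ‖gradient f x‖ + ‖gradient f (x + μ • u) - gradient f x‖ :=
    norm_le_insert' _ _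
  have h2 : ‖gradient f (x + μ • u) - gradient f x‖ ≤ L * (μ * ‖u‖) := by
    have := hf (x + μ • u) x
    simpa [norm_smul, abs_of_pos hμ] using this
  calc ‖gradient f (x + μ • u)‖ ≤ ‖gradient f x‖ + L * (μ * ‖u‖) := by linarith
    _ = ‖gradient f x‖ + L * μ * ‖u‖ := by ring

lemma int_f (x : EuclideanSpace ℝ (Fin n)) :
    Integrable (fun u : EuclideanSpace ℝ (Fin n) => f (x + μ • u)) (stdGaussian n) := by
  have hfc : Continuous f := continuous_iff_continuousAt.mpr fun z => (hdiff z).continuousAt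
  have hcont : Continuous fun u : EuclideanSpace ℝ (Fin n) => x + μ • u :=
    continuous_const.add (continuous_id.const_smul μ)
  refine Integrable.mono'
    (((integrable_const (|f x|)).add
      ((integrable_norm_pow n).const_mul (‖gradient f x‖ * μ))).add
      ((integrable_norm_sq n).const_mul (L * μ ^ 2)))
    ((hfc.comp hcont).aestronglyMeasurable)
    (Filter.Eventually.of_forall fun u => ?_)
  have hns : ‖μ • u‖ = μ * ‖u‖ := by
    rw [norm_smul, Real.norm_eq_abs, abs_of_pos hμ]
  have hd := descent f L hL hdiff hf x (x + μ • u)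
  rw [add_sub_cancel_left, hns, Real.norm_eq_abs] at hd
  have hinner : |(inner ℝ (gradient f x) (μ • u) : ℝ)| ≤ ‖gradient f x‖ * (μ * ‖u‖) := by
    refine (abs_real_inner_le_norm _ _).trans ?_
    rw [hns]
  set a := f (x + μ • u) with ha
  set b := f x with hb
  set c := (inner ℝ (gradient f x) (μ • u) : ℝ) with hc
  have htri : |a| ≤ |a - b - c| + |b| + |c| := by
    have h1 : a = (a - b - c) + b + c := by ring
    calc |a| = |(a - b - c) + b + c| := by rw [← h1]
      _ ≤ |(a - b - c) + b| + |c| := abs_add_le _ _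
      _ ≤ |a - b - c| + |b| + |c| := by
          have := abs_add_le (a - b - c) b
          linarith
  rw [Real.norm_eq_abs]
  have hfin : |a| ≤ |b| + ‖gradient f x‖ * μ * ‖u‖ + L * μ ^ 2 * ‖u‖ ^ 2 := by
    nlinarith [htri, hd, hinner]
  exact hfin

lemma key_identity (x h : EuclideanSpace ℝ (Fin n)) :
    gaussianSmoothing f μ (x + h) - gaussianSmoothing f μ x
      - inner ℝ (∫ u, gradient f (x + μ • u) ∂(stdGaussian n)) h
    = ∫ u, (f (x + h + μ • u) - f (x + μ • u)
        - inner ℝ (gradient f (x + μ • u)) h) ∂(stdGaussian n) := by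
  have hIG := int_grad f L hL hdiff hf μ hμ x
  have hI1 := int_f f L hL hdiff hf μ hμ (x + h)
  have hI2 := int_f f L hL hdiff hf μ hμ x
  have hI3 : Integrable (fun u : EuclideanSpace ℝ (Fin n) => (inner ℝ (gradient f (x + μ • u)) h : ℝ))
      (stdGaussian n) := by
    have := (innerSL ℝ h).integrable_comp hIG
    refine this.congr (Filter.Eventually.of_forall fun u => ?_)
    exact real_inner_comm _ h
  have hinner : (inner ℝ (∫ u, gradient f (x + μ • u) ∂(stdGaussian n)) h : ℝ)
      = ∫ u, (inner ℝ (gradient f (x + μ • u)) h : ℝ) ∂(stdGaussian n) := by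
    have hcc := ContinuousLinearMap.integral_comp_comm (innerSL ℝ h) hIG
    simp only [innerSL_apply_apply] at hcc
    rw [real_inner_comm, ← hcc]
    exact integral_congr_ae (Filter.Eventually.of_forall fun u => real_inner_comm _ _)
  have hI12 : Integrable (fun u : EuclideanSpace ℝ (Fin n) =>
      f (x + h + μ • u) - f (x + μ • u)) (stdGaussian n) := hI1.sub hI2
  rw [hinner, gaussianSmoothing, gaussianSmoothing, ← integral_sub hI1 hI2,
    ← integral_sub hI12 hI3]

lemma hasGradientAt_smoothing (x : EuclideanSpace ℝ (Fin n)) :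
    HasGradientAt (gaussianSmoothing f μ)
      (∫ u, gradient f (x + μ • u) ∂(stdGaussian n)) x := by
  rw [hasGradientAt_iff_hasFDerivAt, hasFDerivAt_iff_isLittleO_nhds_zero]
  have hbound : ∀ h : EuclideanSpace ℝ (Fin n), ‖gaussianSmoothing f μ (x + h) - gaussianSmoothing f μ x
      - (InnerProductSpace.toDual ℝ _ (∫ u, gradient f (x + μ • u) ∂(stdGaussian n))) h‖
      ≤ L * (‖h‖ * ‖h‖) := by
    intro h
    rw [InnerProductSpace.toDual_apply_apply, key_identity f L hL hdiff hf μ hμ x h]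
    refine (norm_integral_le_of_norm_le (integrable_const (L * (‖h‖ * ‖h‖)))
      (Filter.Eventually.of_forall fun u => ?_)).trans ?_
    · have hd := descent f L hL hdiff hf (x + μ • u) (x + μ • u + h)
      have he : x + μ • u + h - (x + μ • u) = h := by abel
      rw [he] at hd
      have he2 : x + h + μ • u = x + μ • u + h := by abel
      rw [he2]
      calc ‖f (x + μ • u + h) - f (x + μ • u) - inner ℝ (gradient f (x + μ • u)) h‖
          ≤ L * ‖h‖ * ‖h‖ := hd
        _ = L * (‖h‖ * ‖h‖) := by ring
    · rw [integral_const]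
      simp
  refine Asymptotics.IsBigO.trans_isLittleO
    (Asymptotics.isBigO_of_le' (c := L) (g := fun h : EuclideanSpace ℝ (Fin n) => ‖h‖ * ‖h‖) (l := nhds 0) fun h => ?_) ?_
  · refine (hbound h).trans ?_
    rw [Real.norm_eq_abs, abs_of_nonneg (by positivity : (0:ℝ) ≤ ‖h‖ * ‖h‖)]
  · rw [Asymptotics.isLittleO_iff]
    intro c hc
    filter_upwards [Metric.ball_mem_nhds (0 : EuclideanSpace ℝ (Fin n)) hc] with h hh
    rw [Metric.mem_ball, dist_zero_right] at hh
    rw [Real.norm_eq_abs, abs_of_nonneg (by positivity : (0:ℝ) ≤ ‖h‖ * ‖h‖)]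
    exact mul_le_mul_of_nonneg_right hh.le (norm_nonneg _)

end core

end GaussianSmoothingAux

open GaussianSmoothingAux in
/-- Gaussian smoothing of an `L`-smooth function is `L`-smooth. -/
theorem gaussianSmoothing_smooth {n : ℕ} (f : EuclideanSpace ℝ (Fin n) → ℝ)
    (L : ℝ)
    (hdiff : ∀ x, DifferentiableAt ℝ f x)
    (hf : ∀ x y, ‖gradient f x - gradient f y‖ ≤ L * ‖x - y‖)
    (μ : ℝ) (hμ : 0 < μ) :
    (∀ x, DifferentiableAt ℝ (gaussianSmoothing f μ) x) ∧
      (∀ x y, ‖gradient (gaussianSmoothing f μ) x - gradient (gaussianSmoothing f μ) y‖ ≤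
        L * ‖x - y‖) := by
  rcases Nat.eq_zero_or_pos n with hn | hn
  · subst hn
    constructor
    · intro x
      have hc : gaussianSmoothing f μ = fun _ => gaussianSmoothing f μ x :=
        funext fun y => by rw [Subsingleton.elim y x]
      rw [hc]
      exact differentiableAt_const _
    · intro x y
      rw [Subsingleton.elim x y]
      simp
  · have hL : 0 ≤ L := by
      have h1 := hf 0 (EuclideanSpace.single ⟨0, hn⟩ 1)
      have h2 : ‖(0 : EuclideanSpace ℝ (Fin n)) - EuclideanSpace.single ⟨0, hn⟩ 1‖ = 1 := by
        rw [zero_sub, norm_neg, EuclideanSpace.norm_single]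
        norm_num
      rw [h2, mul_one] at h1
      exact le_trans (norm_nonneg _) h1
    have hmain := hasGradientAt_smoothing f L hL hdiff hf μ hμ
    constructor
    · exact fun x => (hmain x).differentiableAt
    · intro x y
      rw [(hmain x).gradient, (hmain y).gradient,
        ← integral_sub (int_grad f L hL hdiff hf μ hμ x) (int_grad f L hL hdiff hf μ hμ y)]
      refine (norm_integral_le_of_norm_le (integrable_const (L * ‖x - y‖))
        (Filter.Eventually.of_forall fun u => ?_)).trans ?_
      · have := hf (x + μ • u) (y + μ • u)
        simpa using this
      · rw [integral_const]
        simp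
end

section
/- If f : ℝⁿ → ℝ is L-smooth, then for every x ∈ ℝⁿ the Gaussian smoothing satisfies |fᵘ(x) - f(x)| ≤ (μ²/2) L n. -/
open MeasureTheory Real ProbabilityTheory intervalIntegral
open scoped ENNReal NNReal

section OneDim

lemma integrable_sq_gauss : Integrable (fun x : ℝ => x ^ 2 * Real.exp (-(1/2 : ℝ) * x ^ 2)) := by
  have h := integrable_rpow_mul_exp_neg_mul_sq (b := 1/2) (by norm_num) (s := 2) (by norm_num)
  have : ∀ x : ℝ, x ^ (2:ℝ) = x ^ (2:ℕ) := fun x => by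
    rw [show (2:ℝ) = ((2:ℕ):ℝ) by norm_num, Real.rpow_natCast]
  simpa [this] using h

lemma tendsto_mul_exp_atTop :
    Filter.Tendsto (fun x : ℝ => x * Real.exp (-(1/2 : ℝ) * x ^ 2)) Filter.atTop (nhds 0) := by
  have h := rpow_mul_exp_neg_mul_sq_isLittleO_exp_neg (b := 1/2) (by norm_num) (s := 1)
  have h' : (fun x : ℝ => x * Real.exp (-(1/2:ℝ) * x ^ 2)) =o[Filter.atTop]
      fun x : ℝ => Real.exp (-(1/2:ℝ) * x) := by
    refine h.congr' ?_ (by rfl)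
    filter_upwards [Filter.eventually_gt_atTop 0] with x hx
    rw [Real.rpow_one]
  have hexp : Filter.Tendsto (fun x : ℝ => Real.exp (-(1/2:ℝ) * x)) Filter.atTop (nhds 0) := by
    have t2 : Filter.Tendsto (fun x : ℝ => (1/2:ℝ) * x) Filter.atTop Filter.atTop :=
      Filter.Tendsto.const_mul_atTop (by norm_num) Filter.tendsto_id
    have := Real.tendsto_exp_neg_atTop_nhds_zero.comp t2
    refine this.congr fun x => ?_
    simp [Function.comp, neg_mul]
  exact h'.isBigO.trans_tendsto hexp

lemma integral_sq_gauss :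
    ∫ x : ℝ, x ^ 2 * Real.exp (-(1/2 : ℝ) * x ^ 2) = Real.sqrt (2 * π) := by
  have hderiv : ∀ x : ℝ, HasDerivAt (fun y : ℝ => -y * Real.exp (-(1/2:ℝ) * y ^ 2))
      ((x ^ 2 - 1) * Real.exp (-(1/2:ℝ) * x ^ 2)) x := by
    intro x
    have h1 : HasDerivAt (fun y : ℝ => -(1/2:ℝ) * y ^ 2) (-(1/2:ℝ) * (2 * x)) x := by
      simpa using ((hasDerivAt_pow 2 x).const_mul (-(1/2:ℝ)))
    have h2 := (h1.exp)
    have h3 : HasDerivAt (fun y : ℝ => -y) (-1 : ℝ) x := (hasDerivAt_id x).neg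
    have := h3.mul h2
    exact this.congr_deriv (by ring)
  have hint : Integrable (fun x : ℝ => (x ^ 2 - 1) * Real.exp (-(1/2:ℝ) * x ^ 2)) := by
    have := integrable_sq_gauss.sub ((integrable_exp_neg_mul_sq (by norm_num : (0:ℝ) < 1/2)))
    refine this.congr ?_
    filter_upwards with x
    simp only [Pi.sub_apply]; ring
  have hbot : Filter.Tendsto (fun y : ℝ => -y * Real.exp (-(1/2:ℝ) * y ^ 2))
      Filter.atBot (nhds 0) := by
    have := tendsto_mul_exp_atTop.comp Filter.tendsto_neg_atBot_atTop
    refine this.congr ?_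
    intro x; simp [Function.comp, neg_sq]
  have htop : Filter.Tendsto (fun y : ℝ => -y * Real.exp (-(1/2:ℝ) * y ^ 2))
      Filter.atTop (nhds 0) := by
    simpa using tendsto_mul_exp_atTop.neg
  have key := MeasureTheory.integral_of_hasDerivAt_of_tendsto hderiv hint hbot htop
  simp only [sub_zero] at key
  have := integral_gaussian (1/2 : ℝ)
  have hsplit : ∫ x : ℝ, (x ^ 2 - 1) * Real.exp (-(1/2:ℝ) * x ^ 2)
      = (∫ x : ℝ, x ^ 2 * Real.exp (-(1/2:ℝ) * x ^ 2)) - ∫ x : ℝ, Real.exp (-(1/2:ℝ) * x ^ 2) := by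
    rw [← integral_sub integrable_sq_gauss (integrable_exp_neg_mul_sq (by norm_num))]
    congr 1; ext x; ring
  rw [hsplit] at key
  have h0 : (∫ x : ℝ, Real.exp (-(1/2:ℝ) * x ^ 2)) = Real.sqrt (2 * π) := by
    rw [this]; congr 1; rw [div_div_eq_mul_div]; ring_nf
  linarith [key, h0]

lemma gaussianPDFReal_zero_one (x : ℝ) :
    gaussianPDFReal 0 1 x = (Real.sqrt (2 * π))⁻¹ * Real.exp (-(1/2:ℝ) * x ^ 2) := by
  rw [gaussianPDFReal]
  push_cast
  rw [mul_one]
  congr 1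
  rw [sub_zero]
  ring_nf

lemma integrable_sq_gaussianReal : Integrable (fun x : ℝ => x ^ 2) (gaussianReal 0 1) := by
  rw [gaussianReal_of_var_ne_zero 0 one_ne_zero,
    integrable_withDensity_iff (measurable_gaussianPDF 0 1)
      (Filter.Eventually.of_forall fun x => ENNReal.ofReal_lt_top)]
  have : ∀ x : ℝ, x ^ 2 * (gaussianPDF 0 1 x).toReal
      = (Real.sqrt (2 * π))⁻¹ * (x ^ 2 * Real.exp (-(1/2:ℝ) * x ^ 2)) := by
    intro x
    rw [gaussianPDF, ENNReal.toReal_ofReal (gaussianPDFReal_nonneg 0 1 x),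
      gaussianPDFReal_zero_one]
    ring
  simp_rw [this]
  exact integrable_sq_gauss.const_mul _

lemma integral_sq_gaussianReal : ∫ x, x ^ 2 ∂(gaussianReal 0 1) = 1 := by
  have hpdf : gaussianPDF 0 1 = fun x => ((gaussianPDFReal 0 1 x).toNNReal : ℝ≥0∞) := by
    funext x; rw [gaussianPDF, ENNReal.ofReal]
  rw [gaussianReal_of_var_ne_zero 0 one_ne_zero, hpdf,
    integral_withDensity_eq_integral_smul
      ((measurable_gaussianPDFReal 0 1).real_toNNReal)]
  have : ∀ x : ℝ, (gaussianPDFReal 0 1 x).toNNReal • x ^ 2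
      = (Real.sqrt (2 * π))⁻¹ * (x ^ 2 * Real.exp (-(1/2:ℝ) * x ^ 2)) := by
    intro x
    rw [NNReal.smul_def, smul_eq_mul, Real.coe_toNNReal _ (gaussianPDFReal_nonneg 0 1 x),
      gaussianPDFReal_zero_one]
    ring
  simp_rw [this]
  rw [MeasureTheory.integral_const_mul, integral_sq_gauss, inv_mul_cancel₀]
  positivity

lemma gaussianReal_map_neg : (gaussianReal 0 1).map (fun x : ℝ => -x) = gaussianReal 0 1 := by
  have h := gaussianReal_map_const_mul (μ := 0) (v := 1) (-1)
  simp only [neg_one_mul] at h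
  rw [h]
  norm_num

lemma pi_gauss_map_neg {n : ℕ} :
    (Measure.pi fun _ : Fin n => gaussianReal 0 1).map (fun y (i : Fin n) => -(y i))
      = Measure.pi fun _ : Fin n => gaussianReal 0 1 := by
  refine (Measure.pi_eq fun s hs => ?_).symm
  rw [Measure.map_apply (f := fun (y : Fin n → ℝ) (i : Fin n) => -(y i)) (measurable_pi_lambda _ fun i => (measurable_pi_apply i).neg)
    (MeasurableSet.univ_pi hs)]
  have : (fun y (i : Fin n) => -(y i)) ⁻¹' Set.pi Set.univ s
      = Set.pi Set.univ fun i => (fun x : ℝ => -x) ⁻¹' s i := by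
    ext y; simp [Set.mem_pi]
  rw [this, Measure.pi_pi]
  congr 1
  funext i
  rw [← Measure.map_apply (measurable_neg) (hs i), _root_.gaussianReal_map_neg]

lemma pi_gauss_map_eval {n : ℕ} (i : Fin n) :
    (Measure.pi fun _ : Fin n => gaussianReal 0 1).map (Function.eval i)
      = gaussianReal 0 1 := by
  ext s hs
  classical
  rw [Measure.map_apply (measurable_pi_apply i) hs, Set.eval_preimage, Measure.pi_pi]
  rw [Finset.prod_eq_single i (fun j _ hj => by
      rw [Function.update_of_ne hj]; exact measure_univ)
    (fun h => absurd (Finset.mem_univ i) h), Function.update_self]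

lemma integrable_coord_sq {n : ℕ} (i : Fin n) :
    Integrable (fun y : Fin n → ℝ => (y i) ^ 2)
      (Measure.pi fun _ : Fin n => gaussianReal 0 1) := by
  have h := pi_gauss_map_eval (n := n) i
  have : Integrable (fun x : ℝ => x ^ 2)
      ((Measure.pi fun _ : Fin n => gaussianReal 0 1).map (Function.eval i)) := by
    rw [h]; exact integrable_sq_gaussianReal
  exact (integrable_map_measure this.aestronglyMeasurable
    (measurable_pi_apply i).aemeasurable).mp this

lemma integral_coord_sq {n : ℕ} (i : Fin n) :
    ∫ y : Fin n → ℝ, (y i) ^ 2 ∂(Measure.pi fun _ : Fin n => gaussianReal 0 1) = 1 := by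
  have h := pi_gauss_map_eval (n := n) i
  have hg : AEStronglyMeasurable (fun x : ℝ => x ^ 2)
      ((Measure.pi fun _ : Fin n => gaussianReal 0 1).map (Function.eval i)) := by
    rw [h]; exact integrable_sq_gaussianReal.aestronglyMeasurable
  have h2 := integral_map (μ := Measure.pi fun _ : Fin n => gaussianReal 0 1)
    ((measurable_pi_apply i).aemeasurable) hg
  rw [h] at h2
  rw [← h2, integral_sq_gaussianReal]

end OneDim

section Descent


variable {F : Type*} [NormedAddCommGroup F] [InnerProductSpace ℝ F] [CompleteSpace F]

local notation "⟪" x ", " y "⟫" => inner (𝕜 := ℝ) x y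

lemma grad_lipschitz_continuous {f : F → ℝ} {L : ℝ}
    (hf : ∀ x y, ‖gradient f x - gradient f y‖ ≤ L * ‖x - y‖) :
    Continuous (gradient f) := by
  have : LipschitzWith L.toNNReal (gradient f) := by
    refine LipschitzWith.of_dist_le_mul fun x y => ?_
    rw [dist_eq_norm, dist_eq_norm]
    refine (hf x y).trans ?_
    have : L ≤ (L.toNNReal : ℝ) := Real.le_coe_toNNReal L
    exact mul_le_mul_of_nonneg_right this (norm_nonneg _) |>.trans_eq' rfl
  exact this.continuous

lemma descent_lemma {f : F → ℝ} {L : ℝ}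
    (hdiff : ∀ x, DifferentiableAt ℝ f x)
    (hf : ∀ x y, ‖gradient f x - gradient f y‖ ≤ L * ‖x - y‖)
    (x v : F) :
    |f (x + v) - f x - ⟪gradient f x, v⟫| ≤ L / 2 * ‖v‖ ^ 2 := by
  have hderiv : ∀ t : ℝ, HasDerivAt (fun s : ℝ => f (x + s • v))
      ⟪gradient f (x + t • v), v⟫ t := by
    intro t
    have hc : HasDerivAt (fun s : ℝ => x + s • v) v t := by
      simpa using ((hasDerivAt_id t).smul_const v).const_add x
    have hg : HasGradientAt f (gradient f (x + t • v)) (x + t • v) :=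
      (hdiff _).hasGradientAt
    have hF := hasGradientAt_iff_hasFDerivAt.mp hg
    have := hF.comp_hasDerivAt t hc
    exact this
  have hcont : Continuous fun t : ℝ => ⟪gradient f (x + t • v), v⟫ := by
    apply Continuous.inner
    · exact (grad_lipschitz_continuous hf).comp (by continuity)
    · exact continuous_const
  have hFTC := intervalIntegral.integral_eq_sub_of_hasDerivAt
    (f := fun s : ℝ => f (x + s • v)) (a := 0) (b := 1)
    (fun t _ => hderiv t) (hcont.intervalIntegrable 0 1)
  simp only [one_smul, zero_smul, add_zero] at hFTC
  have hsub : f (x + v) - f x - ⟪gradient f x, v⟫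
      = ∫ t in (0:ℝ)..1, (⟪gradient f (x + t • v), v⟫ - ⟪gradient f x, v⟫) := by
    rw [intervalIntegral.integral_sub (hcont.intervalIntegrable 0 1)
      (intervalIntegrable_const), hFTC]
    simp
  rw [hsub]
  have hptwise : ∀ t ∈ Set.Icc (0:ℝ) 1,
      |⟪gradient f (x + t • v), v⟫ - ⟪gradient f x, v⟫| ≤ (L * ‖v‖ ^ 2) * t := by
    intro t ht
    rw [← inner_sub_left]
    refine (abs_real_inner_le_norm _ _).trans ?_
    have h1 : ‖gradient f (x + t • v) - gradient f x‖ ≤ L * (t * ‖v‖) := by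
      have := hf (x + t • v) x
      simpa [norm_smul, abs_of_nonneg ht.1] using this
    calc ‖gradient f (x + t • v) - gradient f x‖ * ‖v‖ ≤ L * (t * ‖v‖) * ‖v‖ :=
          mul_le_mul_of_nonneg_right h1 (norm_nonneg _)
      _ = L * ‖v‖ ^ 2 * t := by ring
  have habs : |∫ t in (0:ℝ)..1, (⟪gradient f (x + t • v), v⟫ - ⟪gradient f x, v⟫)|
      ≤ ∫ t in (0:ℝ)..1, |⟪gradient f (x + t • v), v⟫ - ⟪gradient f x, v⟫| := by
    exact intervalIntegral.abs_integral_le_integral_abs (by norm_num)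
  refine habs.trans ?_
  have hmono : (∫ t in (0:ℝ)..1, |⟪gradient f (x + t • v), v⟫ - ⟪gradient f x, v⟫|)
      ≤ ∫ t in (0:ℝ)..1, (L * ‖v‖ ^ 2) * t := by
    refine intervalIntegral.integral_mono_on (by norm_num)
      ((hcont.sub continuous_const).abs.intervalIntegrable 0 1)
      ((continuous_const.mul continuous_id).intervalIntegrable 0 1)
      hptwise
  refine hmono.trans ?_
  rw [intervalIntegral.integral_const_mul, integral_id]
  ring_nf
  norm_num

lemma symm_descent {f : F → ℝ} {L : ℝ}
    (hdiff : ∀ x, DifferentiableAt ℝ f x)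
    (hf : ∀ x y, ‖gradient f x - gradient f y‖ ≤ L * ‖x - y‖)
    (x v : F) :
    |f (x + v) + f (x - v) - 2 * f x| ≤ L * ‖v‖ ^ 2 := by
  have h1 := descent_lemma hdiff hf x v
  have h2 := descent_lemma hdiff hf x (-v)
  rw [norm_neg] at h2
  have hi : ⟪gradient f x, -v⟫ = -⟪gradient f x, v⟫ := by
    rw [inner_neg_right]
  rw [hi] at h2
  have : f (x + v) + f (x - v) - 2 * f x
      = (f (x + v) - f x - ⟪gradient f x, v⟫) + (f (x + -v) - f x - -⟪gradient f x, v⟫) := by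
    rw [sub_eq_add_neg x v]; ring
  rw [this]
  calc |_ + _| ≤ _ + _ := abs_add_le _ _
    _ ≤ L / 2 * ‖v‖ ^ 2 + L / 2 * ‖v‖ ^ 2 := add_le_add h1 h2
    _ = L * ‖v‖ ^ 2 := by ring


end Descent

lemma measurable_E {n : ℕ} : Measurable ((EuclideanSpace.equiv (Fin n) ℝ).symm : (Fin n → ℝ) → EuclideanSpace ℝ (Fin n)) :=
  (EuclideanSpace.equiv (Fin n) ℝ).symm.continuous.measurable

instance stdGaussian_prob (n : ℕ) : IsProbabilityMeasure (stdGaussian n) :=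
  Measure.isProbabilityMeasure_map measurable_E.aemeasurable

lemma norm_E_sq {n : ℕ} (y : Fin n → ℝ) :
    ‖(EuclideanSpace.equiv (Fin n) ℝ).symm y‖ ^ 2 = ∑ i, (y i) ^ 2 := by
  rw [EuclideanSpace.norm_eq]
  rw [Real.sq_sqrt (by positivity)]
  congr 1
  funext i
  rw [Real.norm_eq_abs, sq_abs]
  rfl

lemma integrable_norm_sq_stdGaussian {n : ℕ} :
    Integrable (fun u : EuclideanSpace ℝ (Fin n) => ‖u‖ ^ 2) (stdGaussian n) := by
  rw [_root_.stdGaussian, integrable_map_measure (g := fun u : EuclideanSpace ℝ (Fin n) => ‖u‖ ^ 2)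
    ((continuous_norm.pow 2).aestronglyMeasurable) measurable_E.aemeasurable]
  have : ((fun u : EuclideanSpace ℝ (Fin n) => ‖u‖ ^ 2) ∘
      (EuclideanSpace.equiv (Fin n) ℝ).symm) = fun y => ∑ i, (y i) ^ 2 := by
    funext y; exact norm_E_sq y
  rw [this]
  exact integrable_finset_sum _ fun i _ => integrable_coord_sq i

lemma integral_norm_sq_stdGaussian {n : ℕ} :
    ∫ u, ‖u‖ ^ 2 ∂(stdGaussian n) = n := by
  rw [_root_.stdGaussian, integral_map measurable_E.aemeasurable (f := fun u : EuclideanSpace ℝ (Fin n) => ‖u‖ ^ 2) ((continuous_norm.pow 2).aestronglyMeasurable)]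
  have : ∀ y : Fin n → ℝ, ‖(EuclideanSpace.equiv (Fin n) ℝ).symm y‖ ^ 2 = ∑ i, (y i) ^ 2 :=
    norm_E_sq
  simp_rw [this]
  rw [integral_finset_sum _ fun i _ => integrable_coord_sq i]
  simp [integral_coord_sq]

lemma stdGaussian_map_neg {n : ℕ} :
    (stdGaussian n).map (fun u => -u) = stdGaussian n := by
  rw [_root_.stdGaussian, Measure.map_map (by fun_prop) measurable_E]
  have : ((fun u : EuclideanSpace ℝ (Fin n) => -u) ∘ (EuclideanSpace.equiv (Fin n) ℝ).symm)
      = ((EuclideanSpace.equiv (Fin n) ℝ).symm ∘ fun y (i : Fin n) => -(y i)) := by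
    funext y; rfl
  rw [this, ← Measure.map_map (f := fun (y : Fin n → ℝ) (i : Fin n) => -(y i)) measurable_E
    (measurable_pi_lambda _ fun i => (measurable_pi_apply i).neg), pi_gauss_map_neg]


lemma integrable_norm_stdGaussian {n : ℕ} :
    Integrable (fun u : EuclideanSpace ℝ (Fin n) => ‖u‖) (stdGaussian n) := by
  refine Integrable.mono' ((integrable_const 1).add integrable_norm_sq_stdGaussian)
    continuous_norm.aestronglyMeasurable ?_
  filter_upwards with u
  rw [Real.norm_eq_abs, abs_norm]
  simp only [Pi.add_apply]
  nlinarith [norm_nonneg u, sq_nonneg (‖u‖ - 1)]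

lemma integrable_shift {n : ℕ} {f : EuclideanSpace ℝ (Fin n) → ℝ} {L : ℝ}
    (hdiff : ∀ x, DifferentiableAt ℝ f x)
    (hf : ∀ x y, ‖gradient f x - gradient f y‖ ≤ L * ‖x - y‖)
    (x : EuclideanSpace ℝ (Fin n)) (c : ℝ) :
    Integrable (fun u => f (x + c • u)) (stdGaussian n) := by
  have hcontf : Continuous f :=
    continuous_iff_continuousAt.mpr fun y => (hdiff y).continuousAt
  refine Integrable.mono'
    (g := fun u => |f x| + (‖gradient f x‖ * |c|) * ‖u‖ + (L / 2 * c ^ 2) * ‖u‖ ^ 2)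
    (((integrable_const _).add (integrable_norm_stdGaussian.const_mul _)).add
      (integrable_norm_sq_stdGaussian.const_mul _))
    (hcontf.comp (continuous_const.add (continuous_const_smul c))).aestronglyMeasurable ?_
  filter_upwards with u
  rw [Real.norm_eq_abs]
  have hd := descent_lemma hdiff hf x (c • u)
  have hi : |(inner (𝕜 := ℝ) (gradient f x) (c • u))| ≤ ‖gradient f x‖ * |c| * ‖u‖ := by
    refine (abs_real_inner_le_norm _ _).trans ?_
    rw [norm_smul, Real.norm_eq_abs]; ring_nf; rfl
  have hns : ‖c • u‖ ^ 2 = c ^ 2 * ‖u‖ ^ 2 := by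
    rw [norm_smul, mul_pow, Real.norm_eq_abs, sq_abs]
  rw [hns] at hd
  set I := (inner (𝕜 := ℝ) (gradient f x) (c • u)) with hI
  have htri : |f (x + c • u)| ≤ |f (x + c • u) - f x - I| + |I| + |f x| := by
    have h1 := abs_add_le (f (x + c • u) - f x - I + I) (f x)
    have h2 := abs_add_le (f (x + c • u) - f x - I) I
    have he : f (x + c • u) - f x - I + I + f x = f (x + c • u) := by ring
    rw [he] at h1; linarith
  have : |f (x + c • u)| ≤ L / 2 * (c ^ 2 * ‖u‖ ^ 2) + ‖gradient f x‖ * |c| * ‖u‖ + |f x| := by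
    refine htri.trans ?_
    exact add_le_add (add_le_add hd hi) le_rfl
  linarith [this]

/-- `|fᵘ(x) - f(x)| ≤ (μ²/2) L n` for `L`-smooth `f`. -/
theorem gaussianSmoothing_value_close {n : ℕ} (f : EuclideanSpace ℝ (Fin n) → ℝ)
    (L : ℝ)
    (hdiff : ∀ x, DifferentiableAt ℝ f x)
    (hf : ∀ x y, ‖gradient f x - gradient f y‖ ≤ L * ‖x - y‖)
    (μ : ℝ) (hμ : 0 < μ) :
    ∀ x, |gaussianSmoothing f μ x - f x| ≤ μ ^ 2 / 2 * L * n := by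
  intro x
  have hcontf : Continuous f :=
    continuous_iff_continuousAt.mpr fun y => (hdiff y).continuousAt
  have hintp : Integrable (fun u => f (x + μ • u)) (stdGaussian n) :=
    integrable_shift hdiff hf x μ
  have hintm : Integrable (fun u => f (x - μ • u)) (stdGaussian n) := by
    have := integrable_shift hdiff hf x (-μ)
    refine this.congr ?_
    filter_upwards with u
    rw [neg_smul, ← sub_eq_add_neg]
  -- symmetry of the measure
  have hsymm : ∫ u, f (x + μ • u) ∂(stdGaussian n)
      = ∫ u, f (x - μ • u) ∂(stdGaussian n) := by
    have hmeas : AEStronglyMeasurable (fun u => f (x + μ • u))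
        ((stdGaussian n).map (fun u => -u)) := by
      rw [stdGaussian_map_neg]; exact hintp.aestronglyMeasurable
    have := integral_map (μ := stdGaussian n) (measurable_neg.aemeasurable) hmeas
    rw [stdGaussian_map_neg] at this
    rw [this]
    congr 1
    funext u
    rw [smul_neg, ← sub_eq_add_neg]
  -- the symmetrized integrand
  set h : EuclideanSpace ℝ (Fin n) → ℝ :=
    fun u => (f (x + μ • u) + f (x - μ • u)) / 2 - f x with hh
  have hhint : Integrable h (stdGaussian n) :=
    ((hintp.add hintm).div_const 2).sub (integrable_const _)
  have hD : gaussianSmoothing f μ x - f x = ∫ u, h u ∂(stdGaussian n) := by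
    have i2 : ∫ u, h u ∂(stdGaussian n)
        = (∫ u, (f (x + μ • u) + f (x - μ • u)) / 2 ∂(stdGaussian n))
          - ∫ _u, f x ∂(stdGaussian n) :=
      integral_sub ((hintp.add hintm).div_const 2) (integrable_const _)
    have i3 : (∫ u, (f (x + μ • u) + f (x - μ • u)) ∂(stdGaussian n))
        = (∫ u, f (x + μ • u) ∂(stdGaussian n)) + ∫ u, f (x - μ • u) ∂(stdGaussian n) :=
      integral_add hintp hintm
    have i4 : (∫ u, (f (x + μ • u) + f (x - μ • u)) / 2 ∂(stdGaussian n))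
        = (∫ u, (f (x + μ • u) + f (x - μ • u)) ∂(stdGaussian n)) / 2 :=
      integral_div 2 _
    have i5 : (∫ _u : EuclideanSpace ℝ (Fin n), f x ∂(stdGaussian n)) = f x := by
      simp [measure_univ]
    rw [i2, i4, i3, i5, ← hsymm, gaussianSmoothing]
    ring
  rw [hD]
  have hbound : ∀ u : EuclideanSpace ℝ (Fin n),
      |h u| ≤ (L * μ ^ 2 / 2) * ‖u‖ ^ 2 := by
    intro u
    have := symm_descent hdiff hf x (μ • u)
    have hns : ‖μ • u‖ ^ 2 = μ ^ 2 * ‖u‖ ^ 2 := by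
      rw [norm_smul, mul_pow, Real.norm_eq_abs, sq_abs]
    rw [hns] at this
    have : |h u| ≤ (L * (μ ^ 2 * ‖u‖ ^ 2)) / 2 := by
      simp only [hh]
      have heq : (f (x + μ • u) + f (x - μ • u)) / 2 - f x
          = (f (x + μ • u) + f (x - μ • u) - 2 * f x) / 2 := by ring
      rw [heq, abs_div]
      simp only [abs_two]
      linarith [this]
    linarith [this]
  calc |∫ u, h u ∂(stdGaussian n)| ≤ ∫ u, |h u| ∂(stdGaussian n) := by
        simpa [Real.norm_eq_abs] using
          norm_integral_le_integral_norm (μ := stdGaussian n) h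
    _ ≤ ∫ u, (L * μ ^ 2 / 2) * ‖u‖ ^ 2 ∂(stdGaussian n) := by
        refine integral_mono hhint.abs (integrable_norm_sq_stdGaussian.const_mul _) ?_
        intro u; exact hbound u
    _ = μ ^ 2 / 2 * L * n := by
        rw [MeasureTheory.integral_const_mul, integral_norm_sq_stdGaussian]; ring
end
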